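/- Let (V,‖·‖) be a finite dimensional real normed space whose norm is smooth, i.e., for every z ∈ V with ‖z‖ = 1 there is a unique continuous linear functional φ on V with dual norm ‖φ‖* = 1 and φ(z) = 1. If f : V → V is nonexpansive (‖f(x) − f(y)‖ ≤ ‖x − y‖ for all x,y), then the fixed point set Fix(f) = {x ∈ V : f(x) = x} is empty or unbounded if and only if there exists a nonzero continuous linear functional φ on V such that φ(f(x)) ≥ φ(x) for all x ∈ V. -/

import Mathlib

open Filter Topology Metric Bornology


lemma nonexp_fixedPt {V : Type*} [NormedAddCommGroup V] [NormedSpace ℝ V]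
    {K : Set V} (hKc : IsCompact K) (hKconv : Convex ℝ K) (hKne : K.Nonempty)
    {f : V → V} (hf : ∀ x y : V, ‖f x - f y‖ ≤ ‖x - y‖) (hmaps : Set.MapsTo f K K) :
    ∃ x ∈ K, f x = x := by
  obtain ⟨z0, hz0⟩ := hKne
  haveI : Nonempty K := ⟨⟨z0, hz0⟩⟩
  haveI : CompleteSpace K := (completeSpace_coe_iff_isComplete).2 hKc.isComplete
  -- contraction constants
  set c : ℕ → ℝ := fun n => 1 - 1 / (n + 2) with hc
  have hc0 : ∀ n, 0 ≤ c n := by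
    intro n
    have h2 : (1:ℝ) ≤ (n:ℝ) + 2 := by
      have := Nat.cast_nonneg (α := ℝ) n; linarith
    have : 1 / ((n:ℝ) + 2) ≤ 1 := by
      rw [div_le_one (by positivity)]; exact h2
    show (0:ℝ) ≤ 1 - 1 / ((n:ℝ) + 2)
    linarith
  have hc1 : ∀ n, c n < 1 := by
    intro n
    have : 0 < 1 / ((n:ℝ) + 2) := by positivity
    show (1:ℝ) - 1 / ((n:ℝ) + 2) < 1
    linarith
  have hfc : Continuous f := by
    have : LipschitzWith 1 f := by
      apply LipschitzWith.of_dist_le_mul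
      intro x y; simpa [dist_eq_norm] using hf x y
    exact this.continuous
  -- the contraction maps
  have hmem : ∀ n : ℕ, ∀ x : K, c n • f (x : V) + (1 - c n) • z0 ∈ K := by
    intro n x
    exact hKconv (hmaps x.2) hz0 (hc0 n) (by linarith [hc1 n]) (by ring)
  set G : ℕ → K → K := fun n x => ⟨c n • f (x : V) + (1 - c n) • z0, hmem n x⟩ with hG
  have hGcontr : ∀ n, ContractingWith ⟨c n, hc0 n⟩ (G n) := by
    intro n
    refine ⟨by exact_mod_cast hc1 n, ?_⟩
    apply LipschitzWith.of_dist_le_mul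
    intro x y
    have : dist (G n x : V) (G n y : V) = c n * dist (f (x:V)) (f (y:V)) := by
      simp only [hG, dist_eq_norm]
      rw [show c n • f (x:V) + (1 - c n) • z0 - (c n • f (y:V) + (1 - c n) • z0)
          = c n • (f (x:V) - f (y:V)) by module]
      rw [norm_smul]; simp [abs_of_nonneg (hc0 n)]
    have h2 : dist (f (x:V)) (f (y:V)) ≤ dist (x:V) (y:V) := by
      simpa [dist_eq_norm] using hf x y
    calc dist (G n x) (G n y) = c n * dist (f (x:V)) (f (y:V)) := this
      _ ≤ c n * dist (x:V) (y:V) := by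
          exact mul_le_mul_of_nonneg_left h2 (hc0 n)
      _ = (⟨c n, hc0 n⟩ : NNReal) * dist x y := rfl
  -- fixed points of the contractions
  set x : ℕ → K := fun n => (hGcontr n).fixedPoint (G n) with hx
  have hxfix : ∀ n, G n (x n) = x n := fun n => (hGcontr n).fixedPoint_isFixedPt
  -- extract convergent subsequence
  obtain ⟨a, haK, g, hg, hga⟩ := hKc.tendsto_subseq (fun n => (x n).2)
  refine ⟨a, haK, ?_⟩
  -- c (g k) → 1
  have hcg : Tendsto (fun k => c (g k)) atTop (𝓝 1) := by
    have h1 : Tendsto (fun n : ℕ => 1 / ((n:ℝ) + 2)) atTop (𝓝 0) := by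
      have h0 : Tendsto (fun n : ℕ => (n:ℝ) + 2) atTop atTop :=
        tendsto_atTop_add_const_right _ 2 tendsto_natCast_atTop_atTop
      simp only [one_div]; exact h0.inv_tendsto_atTop
    have h2 : Tendsto (fun n : ℕ => c n) atTop (𝓝 1) := by
      have h3 := (tendsto_const_nhds (x := (1:ℝ)) (f := (atTop : Filter ℕ))).sub h1
      simpa [hc, one_div] using h3
    exact h2.comp hg.tendsto_atTop
  have hxa : Tendsto (fun k => ((x (g k) : V))) atTop (𝓝 a) := by
    exact hga
  have hfa : Tendsto (fun k => f ((x (g k) : V))) atTop (𝓝 (f a)) :=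
    (hfc.tendsto a).comp hxa
  have hsub : Tendsto (fun k => (1 : ℝ) - c (g k)) atTop (𝓝 (1 - 1)) :=
    (tendsto_const_nhds (x := (1:ℝ)) (f := (atTop : Filter ℕ))).sub hcg
  have hz0t : Tendsto (fun _ : ℕ => z0) atTop (𝓝 z0) := tendsto_const_nhds
  have hlim : Tendsto (fun k => c (g k) • f ((x (g k) : V)) + (1 - c (g k)) • z0)
      atTop (𝓝 (f a)) := by
    have h4 := (hcg.smul hfa).add (hsub.smul hz0t)
    simpa using h4
  have heq : (fun k => c (g k) • f ((x (g k) : V)) + (1 - c (g k)) • z0)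
      = fun k => ((x (g k) : V)) := by
    funext k
    have := hxfix (g k)
    exact congrArg Subtype.val this
  rw [heq] at hlim
  exact tendsto_nhds_unique hlim hxa


lemma exists_norm_attain {V : Type*} [NormedAddCommGroup V] [NormedSpace ℝ V]
    [FiniteDimensional ℝ V] (φ : V →L[ℝ] ℝ) (hφ : φ ≠ 0) :
    ∃ u : V, ‖u‖ = 1 ∧ φ u = ‖φ‖ := by
  obtain ⟨v, hv⟩ : ∃ v, φ v ≠ 0 := by
    by_contra h
    push_neg at h
    exact hφ (ContinuousLinearMap.ext fun w => by simp [h w])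
  have hv0 : v ≠ 0 := fun h => hv (by simp [h])
  have hvn : ‖v‖ ≠ 0 := norm_ne_zero_iff.2 hv0
  have hsm : ‖v‖⁻¹ • v ∈ sphere (0:V) 1 := by
    simp [norm_smul, abs_of_nonneg (inv_nonneg.2 (norm_nonneg v)), inv_mul_cancel₀ hvn]
  obtain ⟨u, huS, hmax⟩ := (isCompact_sphere (0:V) 1).exists_isMaxOn ⟨_, hsm⟩
    (φ.continuous.continuousOn)
  have hu1 : ‖u‖ = 1 := by simpa using huS
  have hmax' : ∀ w : V, ‖w‖ = 1 → φ w ≤ φ u := by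
    intro w hw
    exact hmax (by simpa using hw)
  have hupos : 0 < φ u := by
    rcases lt_or_gt_of_ne hv with h | h
    · have := hmax' (-(‖v‖⁻¹ • v)) (by simp [norm_smul, abs_of_nonneg (inv_nonneg.2 (norm_nonneg v)), inv_mul_cancel₀ hvn])
      have h2 : 0 < -(‖v‖⁻¹ * φ v) := by
        have : 0 < ‖v‖⁻¹ := inv_pos.2 (norm_pos_iff.2 hv0)
        nlinarith
      simp only [map_neg, map_smul, smul_eq_mul] at this
      linarith
    · have := hmax' (‖v‖⁻¹ • v) (by simpa using hsm)
      have h2 : 0 < ‖v‖⁻¹ * φ v := by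
        have : 0 < ‖v‖⁻¹ := inv_pos.2 (norm_pos_iff.2 hv0)
        positivity
      simp only [map_smul, smul_eq_mul] at this
      linarith
  refine ⟨u, hu1, le_antisymm ?_ ?_⟩
  · calc φ u ≤ |φ u| := le_abs_self _
      _ ≤ ‖φ‖ * ‖u‖ := φ.le_opNorm u
      _ = ‖φ‖ := by rw [hu1, mul_one]
  · apply ContinuousLinearMap.opNorm_le_bound _ (le_of_lt hupos)
    intro w
    rcases eq_or_ne w 0 with rfl | hw
    · simp
    · have hwn : ‖w‖ ≠ 0 := norm_ne_zero_iff.2 hw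
      have hwpos : 0 < ‖w‖ := norm_pos_iff.2 hw
      have h1 : φ (‖w‖⁻¹ • w) ≤ φ u := hmax' _ (by
        simp [norm_smul, abs_of_nonneg (inv_nonneg.2 (norm_nonneg w)), inv_mul_cancel₀ hwn])
      have h2 : φ (-(‖w‖⁻¹ • w)) ≤ φ u := hmax' _ (by
        simp [norm_smul, abs_of_nonneg (inv_nonneg.2 (norm_nonneg w)), inv_mul_cancel₀ hwn])
      simp only [map_smul, map_neg, smul_eq_mul] at h1 h2
      rw [Real.norm_eq_abs, abs_le]
      constructor
      · have := mul_le_mul_of_nonneg_left h2 (le_of_lt hwpos)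
        rw [mul_neg, mul_inv_cancel_left₀ hwn] at this
        linarith [mul_comm (φ u) ‖w‖]
      · have := mul_le_mul_of_nonneg_left h1 (le_of_lt hwpos)
        rw [mul_inv_cancel_left₀ hwn] at this
        linarith [mul_comm (φ u) ‖w‖]


lemma smooth_limit {V : Type*} [NormedAddCommGroup V] [NormedSpace ℝ V]
    [FiniteDimensional ℝ V]
    (hsmooth : ∀ z : V, ‖z‖ = 1 → ∃! φ : V →L[ℝ] ℝ, ‖φ‖ = 1 ∧ φ z = 1)
    {z : V} (hz : ‖z‖ = 1) {φ : V →L[ℝ] ℝ} (hφ : ‖φ‖ = 1 ∧ φ z = 1)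
    {u : ℕ → V} (hu : Tendsto u atTop (𝓝 z)) (hu1 : ∀ n, ‖u n‖ = 1)
    {ψ : ℕ → V →L[ℝ] ℝ} (hψn : ∀ n, ‖ψ n‖ = 1) (hψu : ∀ n, ψ n (u n) = 1)
    {w : V} (hw : ∀ n, ψ n w ≤ 0) : φ w ≤ 0 := by
  have hball : ∀ n, ψ n ∈ closedBall (0 : V →L[ℝ] ℝ) 1 := by
    intro n
    simp [mem_closedBall, dist_eq_norm, hψn n]
  obtain ⟨χ, hχball, g, hg, hgχ⟩ :=
    (isCompact_closedBall (0 : V →L[ℝ] ℝ) 1).tendsto_subseq hball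
  have hχnorm : ‖χ‖ ≤ 1 := by simpa [dist_eq_norm] using hχball
  -- evaluation convergence
  have heval : ∀ v : V, Tendsto (fun k => ψ (g k) v) atTop (𝓝 (χ v)) := by
    intro v
    have : Continuous fun T : V →L[ℝ] ℝ => T v :=
      (ContinuousLinearMap.apply ℝ ℝ v).continuous
    exact (this.tendsto χ).comp hgχ
  -- χ z = 1
  have hχz : χ z = 1 := by
    have h1 : Tendsto (fun k => ψ (g k) (u (g k))) atTop (𝓝 1) := by
      simp only [hψu]; exact tendsto_const_nhds
    have h2 : Tendsto (fun k => ψ (g k) (z - u (g k))) atTop (𝓝 0) := by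
      apply squeeze_zero_norm (a := fun k => ‖z - u (g k)‖)
      · intro k
        calc ‖ψ (g k) (z - u (g k))‖ ≤ ‖ψ (g k)‖ * ‖z - u (g k)‖ :=
              (ψ (g k)).le_opNorm _
          _ = ‖z - u (g k)‖ := by rw [hψn, one_mul]
      · have huz : Tendsto (fun k => u (g k)) atTop (𝓝 z) := hu.comp hg.tendsto_atTop
        have := (tendsto_const_nhds (x := z) (f := (atTop : Filter ℕ))).sub huz
        simpa using this.norm
    have h3 : Tendsto (fun k => ψ (g k) z) atTop (𝓝 1) := by
      have := h1.add h2
      simp only [← map_add] at this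
      simpa using this
    exact tendsto_nhds_unique (heval z) h3
  have hχn : ‖χ‖ = 1 := by
    refine le_antisymm hχnorm ?_
    have := χ.le_opNorm z
    rw [hχz, hz, mul_one] at this
    calc (1:ℝ) = ‖(1:ℝ)‖ := by simp
      _ ≤ ‖χ‖ := this
  -- uniqueness
  obtain ⟨φ₀, hφ₀, huniq⟩ := hsmooth z hz
  have h1 : φ = φ₀ := huniq φ hφ
  have h2 : χ = φ₀ := huniq χ ⟨hχn, hχz⟩
  rw [h1, ← h2]
  exact le_of_tendsto (heval w) (Eventually.of_forall fun k => hw (g k))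


lemma dir_tendsto {V : Type*} [NormedAddCommGroup V] [NormedSpace ℝ V]
    {a : ℕ → V} {z : V} (x : V)
    (ha : Tendsto (fun n => ‖a n‖) atTop atTop)
    (hd : Tendsto (fun n => ‖a n‖⁻¹ • a n) atTop (𝓝 z)) :
    Tendsto (fun n => ‖a n - x‖⁻¹ • (a n - x)) atTop (𝓝 z) := by
  have hax : Tendsto (fun n => ‖a n - x‖) atTop atTop := by
    apply tendsto_atTop_mono' _ _ (tendsto_atTop_add_const_right _ (-‖x‖) ha)
    exact Eventually.of_forall fun n => by
      show ‖a n‖ + -‖x‖ ≤ ‖a n - x‖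
      have := norm_sub_norm_le (a n) x; linarith
  have hr : Tendsto (fun n => ‖a n - x‖⁻¹ * ‖a n‖ - 1) atTop (𝓝 0) := by
    apply squeeze_zero_norm' (a := fun n => ‖a n - x‖⁻¹ * ‖x‖)
    · filter_upwards [hax.eventually_ge_atTop 1] with n hn
      have hpos : 0 < ‖a n - x‖ := by linarith
      have heq : ‖a n - x‖⁻¹ * ‖a n‖ - 1 = ‖a n - x‖⁻¹ * (‖a n‖ - ‖a n - x‖) := by
        field_simp
      rw [heq, Real.norm_eq_abs, abs_mul, abs_of_nonneg (inv_nonneg.2 hpos.le)]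
      apply mul_le_mul_of_nonneg_left _ (inv_nonneg.2 hpos.le)
      have := abs_norm_sub_norm_le (a n) (a n - x)
      simpa using this
    · have := hax.inv_tendsto_atTop.mul_const ‖x‖
      simpa using this
  have hr1 : Tendsto (fun n => ‖a n - x‖⁻¹ * ‖a n‖) atTop (𝓝 1) := by
    have := hr.add (tendsto_const_nhds (x := (1:ℝ)) (f := (atTop : Filter ℕ)))
    simpa using this
  have hinv : Tendsto (fun n => ‖a n - x‖⁻¹) atTop (𝓝 0) := hax.inv_tendsto_atTop
  have hxconst : Tendsto (fun _ : ℕ => x) atTop (𝓝 x) := tendsto_const_nhds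
  have main := (hr1.smul hd).sub (hinv.smul hxconst)
  have main' : Tendsto (fun n => (‖a n - x‖⁻¹ * ‖a n‖) • (‖a n‖⁻¹ • a n)
      - ‖a n - x‖⁻¹ • x) atTop (𝓝 z) := by simpa using main
  apply main'.congr'
  filter_upwards [ha.eventually_ge_atTop 1] with n hn
  have hpos : (0:ℝ) < ‖a n‖ := by linarith
  rw [smul_smul, mul_assoc, mul_inv_cancel₀ (ne_of_gt hpos), mul_one, ← smul_sub]

lemma construct_phi {V : Type*} [NormedAddCommGroup V] [NormedSpace ℝ V]
    [FiniteDimensional ℝ V]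
    (hsmooth : ∀ z : V, ‖z‖ = 1 → ∃! φ : V →L[ℝ] ℝ, ‖φ‖ = 1 ∧ φ z = 1)
    (f : V → V) (q : ℕ → V) (δ : ℕ → ℝ) (hδ : ∀ n, 0 ≤ δ n)
    (hq : ∀ (x : V) (n : ℕ), ‖f x - (1 + δ n) • q n‖ ≤ ‖x - q n‖)
    (hqtop : Tendsto (fun n => ‖q n‖) atTop atTop) :
    ∃ φ : V →L[ℝ] ℝ, φ ≠ 0 ∧ ∀ x, φ x ≤ φ (f x) := by
  classical
  obtain ⟨n₀, hn₀⟩ := (hqtop.eventually_ge_atTop 1).exists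
  haveI : Nontrivial V := nontrivial_of_ne (q n₀) 0 (by
    intro h; rw [h] at hn₀; simp at hn₀; linarith)
  obtain ⟨e, he⟩ := NormedSpace.sphere_nonempty (E := V) (x := 0) (r := 1) |>.2 zero_le_one
  set w : ℕ → V := fun n => if q n = 0 then e else ‖q n‖⁻¹ • q n with hwdef
  have hwS : ∀ n, w n ∈ sphere (0:V) 1 := by
    intro n
    by_cases h : q n = 0
    · simpa [hwdef, h] using he
    · have : ‖q n‖ ≠ 0 := norm_ne_zero_iff.2 h
      simp [hwdef, h, norm_smul, abs_of_nonneg (inv_nonneg.2 (norm_nonneg (q n))),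
        inv_mul_cancel₀ this]
  obtain ⟨z, hzS, g, hg, hgz⟩ := (isCompact_sphere (0:V) 1).tendsto_subseq hwS
  have hz : ‖z‖ = 1 := by simpa using hzS
  obtain ⟨φ, hφ⟩ := (hsmooth z hz).exists
  refine ⟨φ, ?_, ?_⟩
  · intro h
    rw [h] at hφ
    simp at hφ
  intro x
  have hQtop : Tendsto (fun k => ‖q (g k)‖) atTop atTop := hqtop.comp hg.tendsto_atTop
  obtain ⟨K₀, hK₀⟩ := (hQtop.eventually_ge_atTop (2 * ‖x‖ + 1)).exists_forall_of_atTop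
  set m : ℕ → ℕ := fun k => g (k + K₀) with hm
  set a : ℕ → V := fun k => q (m k) with hadef
  have hshift : Tendsto (fun k : ℕ => k + K₀) atTop atTop := tendsto_add_atTop_nat K₀
  have hatop : Tendsto (fun k => ‖a k‖) atTop atTop := hQtop.comp hshift
  have haK : ∀ k, 2 * ‖x‖ + 1 ≤ ‖a k‖ := fun k => hK₀ (k + K₀) (Nat.le_add_left _ _)
  have hane : ∀ k, a k ≠ 0 := by
    intro k h
    have := haK k
    rw [h] at this
    simp at this
    nlinarith [norm_nonneg x]
  have hdir : Tendsto (fun k => ‖a k‖⁻¹ • a k) atTop (𝓝 z) := by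
    have h1 : Tendsto (fun k => w (g (k + K₀))) atTop (𝓝 z) := hgz.comp hshift
    apply h1.congr
    intro k
    simp only [hwdef, hadef, hm, if_neg (hane k)]
    exact if_neg (hane k)
  have hax : ∀ k, ‖x‖ + 1 ≤ ‖a k - x‖ := by
    intro k
    have h1 := norm_sub_norm_le (a k) x
    have := haK k
    linarith
  have haxne : ∀ k, a k - x ≠ 0 := by
    intro k h
    have := hax k
    rw [h] at this
    simp at this
    nlinarith [norm_nonneg x]
  choose ψ hψ1 hψ2 using fun k => exists_dual_vector ℝ (a k - x) (norm_ne_zero_iff.2 (haxne k))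
  have hψ2' : ∀ k, ψ k (a k - x) = ‖a k - x‖ := by
    intro k; simpa using hψ2 k
  set u : ℕ → V := fun k => ‖a k - x‖⁻¹ • (a k - x) with hudef
  have hu : Tendsto u atTop (𝓝 z) := dir_tendsto x hatop hdir
  have haxpos : ∀ k, (0:ℝ) < ‖a k - x‖ := by
    intro k; have := hax k; have := norm_nonneg x; linarith
  have hu1 : ∀ k, ‖u k‖ = 1 := by
    intro k
    simp [hudef, norm_smul, abs_of_nonneg (inv_nonneg.2 (haxpos k).le),
      inv_mul_cancel₀ (ne_of_gt (haxpos k))]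
  have hψu : ∀ k, ψ k (u k) = 1 := by
    intro k
    simp only [hudef, map_smul, smul_eq_mul, hψ2' k]
    exact inv_mul_cancel₀ (ne_of_gt (haxpos k))
  have hw0 : ∀ k, ψ k (x - f x) ≤ 0 := by
    intro k
    set d := δ (m k) with hd
    have hd0 : 0 ≤ d := hδ (m k)
    have h1 : ψ k ((1 + d) • a k - f x) ≤ ‖x - a k‖ := by
      calc ψ k ((1 + d) • a k - f x) ≤ |ψ k ((1 + d) • a k - f x)| := le_abs_self _
        _ ≤ ‖ψ k‖ * ‖(1 + d) • a k - f x‖ := (ψ k).le_opNorm _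
        _ = ‖f x - (1 + d) • a k‖ := by rw [hψ1, one_mul, norm_sub_rev]
        _ ≤ ‖x - a k‖ := hq x (m k)
    have h2 : ‖x - a k‖ = ψ k (a k) - ψ k x := by
      rw [norm_sub_rev, ← hψ2' k, map_sub]
    have h3 : ψ k ((1 + d) • a k - f x) = (1 + d) * ψ k (a k) - ψ k (f x) := by
      rw [map_sub, map_smul, smul_eq_mul]
    have h4 : |ψ k x| ≤ ‖x‖ := by
      calc |ψ k x| ≤ ‖ψ k‖ * ‖x‖ := (ψ k).le_opNorm x
        _ = ‖x‖ := by rw [hψ1, one_mul]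
    have h5 : 0 ≤ ψ k (a k) := by
      have : ψ k (a k) = ‖a k - x‖ + ψ k x := by
        rw [← hψ2' k, map_sub]; ring
      rw [this]
      have := hax k
      have := abs_le.1 h4
      linarith
    rw [map_sub]
    rw [h3, h2] at h1
    nlinarith
  have := smooth_limit hsmooth hz hφ hu hu1 hψ1 hψu hw0
  rw [map_sub] at this
  linarith

/-- For a nonexpansive map on a finite dimensional real normed space with a smooth norm,
the fixed point set is empty or unbounded iff there is a nonzero continuous linear
functional `φ` with `φ(f(x)) ≥ φ(x)` for all `x`. -/
theorem stmt2 {V : Type*} [NormedAddCommGroup V] [NormedSpace ℝ V] [FiniteDimensional ℝ V]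
    (hsmooth : ∀ z : V, ‖z‖ = 1 → ∃! φ : V →L[ℝ] ℝ, ‖φ‖ = 1 ∧ φ z = 1)
    (f : V → V) (hf : ∀ x y : V, ‖f x - f y‖ ≤ ‖x - y‖) :
    ({x : V | f x = x} = ∅ ∨ ¬ Bornology.IsBounded {x : V | f x = x}) ↔
      ∃ φ : V →L[ℝ] ℝ, φ ≠ 0 ∧ ∀ x : V, φ x ≤ φ (f x) := by
  classical
  haveI : Nonempty V := ⟨0⟩
  have hfc : Continuous f := by
    have : LipschitzWith 1 f := by
      apply LipschitzWith.of_dist_le_mul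
      intro x y; simpa [dist_eq_norm] using hf x y
    exact this.continuous
  constructor
  · rintro (hempty | hunb)
    · -- fixed point set empty
      set c : ℕ → ℝ := fun n => 1 - 1 / (n + 2) with hcdef
      have hc0 : ∀ n, 0 < c n := by
        intro n
        have h2 : (2:ℝ) ≤ (n:ℝ) + 2 := by
          have := Nat.cast_nonneg (α := ℝ) n; linarith
        have : 1 / ((n:ℝ) + 2) ≤ 1 / 2 := by
          apply one_div_le_one_div_of_le <;> linarith
        show (0:ℝ) < 1 - 1 / ((n:ℝ) + 2)
        linarith
      have hc1 : ∀ n, c n < 1 := by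
        intro n
        have : 0 < 1 / ((n:ℝ) + 2) := by positivity
        show (1:ℝ) - 1 / ((n:ℝ) + 2) < 1
        linarith
      set F : ℕ → V → V := fun n x => c n • f x with hFdef
      have hFcontr : ∀ n, ContractingWith ⟨c n, (hc0 n).le⟩ (F n) := by
        intro n
        refine ⟨by exact_mod_cast hc1 n, ?_⟩
        apply LipschitzWith.of_dist_le_mul
        intro x y
        have h1 : dist (F n x) (F n y) = c n * ‖f x - f y‖ := by
          simp only [hFdef, dist_eq_norm, ← smul_sub, norm_smul,
            Real.norm_eq_abs, abs_of_nonneg (hc0 n).le]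
        rw [h1]
        calc c n * ‖f x - f y‖ ≤ c n * ‖x - y‖ :=
              mul_le_mul_of_nonneg_left (hf x y) (hc0 n).le
          _ = (⟨c n, (hc0 n).le⟩ : NNReal) * dist x y := by rw [dist_eq_norm]
      set q : ℕ → V := fun n => (hFcontr n).fixedPoint (F n) with hqdef
      have hqfix : ∀ n, c n • f (q n) = q n := fun n => (hFcontr n).fixedPoint_isFixedPt
      have hfq : ∀ n, f (q n) = (1 + ((c n)⁻¹ - 1)) • q n := by
        intro n
        have h1 : (1 + ((c n)⁻¹ - 1)) = (c n)⁻¹ := by ring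
        rw [h1]
        conv_rhs => rw [← hqfix n]
        rw [smul_smul, inv_mul_cancel₀ (ne_of_gt (hc0 n)), one_smul]
      have hδ0 : ∀ n, 0 ≤ (c n)⁻¹ - 1 := by
        intro n
        have hinv : c n * (c n)⁻¹ = 1 := mul_inv_cancel₀ (ne_of_gt (hc0 n))
        have h2 : 0 ≤ (1 - c n) * (c n)⁻¹ :=
          mul_nonneg (by linarith [hc1 n]) (inv_nonneg.2 (hc0 n).le)
        nlinarith [h2, hinv]
      have hqtop : Tendsto (fun n => ‖q n‖) atTop atTop := by
        by_contra hcon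
        rw [Filter.tendsto_atTop] at hcon
        push_neg at hcon
        obtain ⟨b, hb⟩ := hcon
        have hb' : ∃ᶠ n in atTop, q n ∈ closedBall (0:V) b := by
          apply hb.mono
          intro n hn
          simp [mem_closedBall, dist_eq_norm]
          linarith
        obtain ⟨a, _, g, hg, hga⟩ :=
          tendsto_subseq_of_frequently_bounded isBounded_closedBall hb'
        have hcg : Tendsto (fun k => c (g k)) atTop (𝓝 1) := by
          have h1 : Tendsto (fun n : ℕ => 1 / ((n:ℝ) + 2)) atTop (𝓝 0) := by
            have h0 : Tendsto (fun n : ℕ => (n:ℝ) + 2) atTop atTop :=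
              tendsto_atTop_add_const_right _ 2 tendsto_natCast_atTop_atTop
            simp only [one_div]; exact h0.inv_tendsto_atTop
          have h2 : Tendsto (fun n : ℕ => c n) atTop (𝓝 1) := by
            have h3 := (tendsto_const_nhds (x := (1:ℝ)) (f := (atTop : Filter ℕ))).sub h1
            simpa [hcdef, one_div] using h3
          exact h2.comp hg.tendsto_atTop
        have hqa : Tendsto (fun k => q (g k)) atTop (𝓝 a) := by
          exact hga
        have hfa : Tendsto (fun k => f (q (g k))) atTop (𝓝 (f a)) :=
          (hfc.tendsto a).comp hqa
        have hlim : Tendsto (fun k => c (g k) • f (q (g k))) atTop (𝓝 (f a)) := by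
          have := hcg.smul hfa
          simpa using this
        have heq : (fun k => c (g k) • f (q (g k))) = fun k => q (g k) := by
          funext k; exact hqfix (g k)
        rw [heq] at hlim
        have hfix : f a = a := tendsto_nhds_unique hlim hqa
        have : a ∈ {x : V | f x = x} := hfix
        rw [hempty] at this
        exact this
      apply construct_phi hsmooth f q (fun n => (c n)⁻¹ - 1) hδ0 _ hqtop
      intro x n
      have hthis := hf x (q n)
      rw [hfq n] at hthis
      exact hthis
    · -- fixed point set unbounded
      rw [isBounded_iff_forall_norm_le] at hunb
      push_neg at hunb
      have h : ∀ n : ℕ, ∃ p : V, f p = p ∧ (n:ℝ) < ‖p‖ := by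
        intro n
        obtain ⟨p, hp, hn⟩ := hunb n
        exact ⟨p, hp, hn⟩
      choose q hqfix hqn using h
      apply construct_phi hsmooth f q (fun _ => 0) (fun _ => le_refl 0) _ ?_
      · intro x n
        have h0 := hf x (q n)
        rw [hqfix n] at h0
        simpa using h0
      · apply tendsto_atTop_mono (fun n => (hqn n).le) tendsto_natCast_atTop_atTop
  · rintro ⟨φ, hφ0, hmono⟩
    by_contra hcon
    push_neg at hcon
    obtain ⟨hne, hbdd⟩ := hcon
    obtain ⟨p, hp⟩ := hne
    have hp : f p = p := hp
    obtain ⟨R, hR⟩ := isBounded_iff_forall_norm_le.1 hbdd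
    have hpR : ‖p‖ ≤ R := hR p hp
    obtain ⟨u, hu1, huφ⟩ := exists_norm_attain φ hφ0
    have hφpos : 0 < ‖φ‖ := norm_pos_iff.2 hφ0
    set t : ℝ := R + ‖p‖ + 1 with htdef
    have ht : 0 < t := by
      have := norm_nonneg p
      show (0:ℝ) < R + ‖p‖ + 1
      linarith
    set K : Set V := {y : V | ‖y - p‖ ≤ t ∧ φ (y - p) = t * ‖φ‖} with hKdef
    have hKne : K.Nonempty := by
      refine ⟨p + t • u, ?_, ?_⟩
      · show ‖p + t • u - p‖ ≤ t
        simp [norm_smul, abs_of_nonneg ht.le, hu1]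
      · show φ (p + t • u - p) = t * ‖φ‖
        simp [map_smul, huφ]
    have hKconv : Convex ℝ K := by
      intro y1 hy1 y2 hy2 α β hα hβ hαβ
      obtain ⟨h1n, h1φ⟩ := hy1
      obtain ⟨h2n, h2φ⟩ := hy2
      have hp1 : (α + β) • p = p := by rw [hαβ, one_smul]
      have hre : α • y1 + β • y2 - p = α • (y1 - p) + β • (y2 - p) := by
        calc α • y1 + β • y2 - p = α • y1 + β • y2 - (α + β) • p := by rw [hp1]
          _ = α • (y1 - p) + β • (y2 - p) := by module
      constructor
      · show ‖α • y1 + β • y2 - p‖ ≤ t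
        rw [hre]
        calc ‖α • (y1 - p) + β • (y2 - p)‖ ≤ ‖α • (y1 - p)‖ + ‖β • (y2 - p)‖ :=
              norm_add_le _ _
          _ = α * ‖y1 - p‖ + β * ‖y2 - p‖ := by
              rw [norm_smul, norm_smul, Real.norm_eq_abs, Real.norm_eq_abs,
                abs_of_nonneg hα, abs_of_nonneg hβ]
          _ ≤ α * t + β * t := by
              apply add_le_add (mul_le_mul_of_nonneg_left h1n hα)
                (mul_le_mul_of_nonneg_left h2n hβ)
          _ = t := by rw [← add_mul, hαβ, one_mul]
      · show φ (α • y1 + β • y2 - p) = t * ‖φ‖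
        rw [hre, map_add, map_smul, map_smul, smul_eq_mul, smul_eq_mul, h1φ, h2φ,
          ← add_mul, hαβ, one_mul]
    have hcball : IsClosed (closedBall p t) := isClosed_closedBall
    have hKclosed : IsClosed K := by
      have hKeq : K = closedBall p t ∩ (fun y => φ (y - p)) ⁻¹' {t * ‖φ‖} := by
        ext y
        simp [hKdef, mem_closedBall, dist_eq_norm]
      rw [hKeq]
      exact IsClosed.inter hcball (IsClosed.preimage
        (φ.continuous.comp (continuous_id.sub continuous_const)) isClosed_singleton)
    have hKcomp : IsCompact K := by
      apply (isCompact_closedBall p t).of_isClosed_subset hKclosed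
      intro y hy
      rw [mem_closedBall, dist_eq_norm]
      exact hy.1
    have hmaps : Set.MapsTo f K K := by
      intro y hy
      obtain ⟨hyn, hyφ⟩ := hy
      have h1 : ‖f y - p‖ ≤ t := by
        calc ‖f y - p‖ = ‖f y - f p‖ := by rw [hp]
          _ ≤ ‖y - p‖ := hf y p
          _ ≤ t := hyn
      refine ⟨h1, ?_⟩
      have h2 : t * ‖φ‖ ≤ φ (f y - p) := by
        rw [map_sub]
        have := hmono y
        rw [map_sub] at hyφ
        linarith
      have h3 : φ (f y - p) ≤ t * ‖φ‖ := by
        calc φ (f y - p) ≤ |φ (f y - p)| := le_abs_self _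
          _ ≤ ‖φ‖ * ‖f y - p‖ := φ.le_opNorm _
          _ ≤ ‖φ‖ * t := mul_le_mul_of_nonneg_left h1 hφpos.le
          _ = t * ‖φ‖ := mul_comm _ _
      linarith
    obtain ⟨y, hyK, hyfix⟩ := nonexp_fixedPt hKcomp hKconv hKne hf hmaps
    have hyR : ‖y‖ ≤ R := hR y hyfix
    have h4 : ‖φ‖ * t ≤ ‖φ‖ * ‖y - p‖ := by
      rw [mul_comm ‖φ‖ t, ← hyK.2]
      calc φ (y - p) ≤ |φ (y - p)| := le_abs_self _
        _ ≤ ‖φ‖ * ‖y - p‖ := φ.le_opNorm _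
    have h5 : t ≤ ‖y - p‖ := le_of_mul_le_mul_left h4 hφpos
    have h6 : ‖y - p‖ ≤ ‖y‖ + ‖p‖ := norm_sub_le _ _
    have : R + ‖p‖ + 1 ≤ R + ‖p‖ := by
      calc R + ‖p‖ + 1 = t := rfl
        _ ≤ ‖y - p‖ := h5
        _ ≤ ‖y‖ + ‖p‖ := h6
        _ ≤ R + ‖p‖ := by linarith
    linarith
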